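/- Let K be a measurable space, F a separable real Hilbert space, and f ↦ ν_f an energy-measure assignment on (F, K). Then the set F_dom := { f ∈ F : ν_f is a minimal energy-dominant measure } is dense in F. -/

import Mathlib

open MeasureTheory

/-- The mutual measure value `ν_{f,g}(B) := (ν_{f+g}(B) − ν_f(B) − ν_g(B))/2`. -/
noncomputable def mutualEM {F K : Type*} [MeasurableSpace K] [Add F]
    (em : F → Measure K) (f g : F) (B : Set K) : ℝ :=
  ((em (f + g) B).toReal - (em f B).toReal - (em g B).toReal) / 2

/-- An energy-measure assignment on `(F, K)`: each `f : F` is assigned a finite measure `ν_f`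
on `K` such that (a) for every measurable `B`, `(f, g) ↦ ν_{f,g}(B)` is a (symmetric) bilinear
form on `F`, and (b) `(√(ν_f B) − √(ν_g B))² ≤ ν_{f−g}(B) ≤ 2‖f − g‖²` for all measurable `B`.
(Symmetry of the mutual form is automatic from its definition.) -/
structure EnergyMeasureAssignment (F K : Type*) [MeasurableSpace K]
    [NormedAddCommGroup F] [NormedSpace ℝ F] where
  em : F → Measure K
  finite : ∀ f, IsFiniteMeasure (em f)
  add_left : ∀ (f₁ f₂ g : F) (B : Set K), MeasurableSet B →
    mutualEM em (f₁ + f₂) g B = mutualEM em f₁ g B + mutualEM em f₂ g B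
  smul_left : ∀ (c : ℝ) (f g : F) (B : Set K), MeasurableSet B →
    mutualEM em (c • f) g B = c * mutualEM em f g B
  sqrt_diff_le : ∀ (f g : F) (B : Set K), MeasurableSet B →
    (Real.sqrt (em f B).toReal - Real.sqrt (em g B).toReal) ^ 2 ≤ (em (f - g) B).toReal
  le_norm : ∀ (f g : F) (B : Set K), MeasurableSet B →
    (em (f - g) B).toReal ≤ 2 * ‖f - g‖ ^ 2

/-- `ν` is a minimal energy-dominant measure: it is σ-finite, dominates every energy measure,
and is absolutely continuous with respect to any other σ-finite measure that does so. -/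
def IsMinimalEnergyDominant {F K : Type*} [MeasurableSpace K]
    [NormedAddCommGroup F] [NormedSpace ℝ F]
    (E : EnergyMeasureAssignment F K) (ν : Measure K) : Prop :=
  SigmaFinite ν ∧ (∀ f, E.em f ≪ ν) ∧
    ∀ ν' : Measure K, SigmaFinite ν' → (∀ f, E.em f ≪ ν') → ν ≪ ν'

open ENNReal

namespace EnergyMeasureAssignment
variable {F K : Type*} [MeasurableSpace K] [NormedAddCommGroup F] [NormedSpace ℝ F]
variable (E : EnergyMeasureAssignment F K)

/-- `Q g B = ν_g(B)` as a real number. -/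
noncomputable def Q (g : F) (B : Set K) : ℝ := (E.em g B).toReal

lemma Q_nonneg (g : F) (B : Set K) : 0 ≤ E.Q g B := ENNReal.toReal_nonneg

lemma m_symm (f g : F) (B : Set K) : mutualEM E.em f g B = mutualEM E.em g f B := by
  simp [mutualEM, add_comm f g]; ring

lemma Q_add (f g : F) (B : Set K) :
    E.Q (f + g) B = E.Q f B + E.Q g B + 2 * mutualEM E.em f g B := by
  simp [mutualEM, Q]; ring

lemma m_smul_right (c : ℝ) (f g : F) (B : Set K) (hB : MeasurableSet B) :
    mutualEM E.em f (c • g) B = c * mutualEM E.em f g B := by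
  rw [m_symm, E.smul_left c g f B hB, m_symm]

lemma m_add_right (f g₁ g₂ : F) (B : Set K) (hB : MeasurableSet B) :
    mutualEM E.em f (g₁ + g₂) B = mutualEM E.em f g₁ B + mutualEM E.em f g₂ B := by
  rw [m_symm, E.add_left g₁ g₂ f B hB, m_symm, m_symm E g₂]

lemma m_zero_left (g : F) (B : Set K) (hB : MeasurableSet B) :
    mutualEM E.em 0 g B = 0 := by
  have := E.smul_left 0 0 g B hB
  simpa using this

lemma Q_zero (B : Set K) (hB : MeasurableSet B) : E.Q 0 B = 0 := by
  have h := E.Q_add 0 0 B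
  have h0 : mutualEM E.em 0 0 B = 0 := E.m_zero_left 0 B hB
  simp only [add_zero] at h
  rw [h0] at h
  linarith

/-- `m(f,f) = Q f` : the mutual form is the quadratic form. -/
lemma m_self (f : F) (B : Set K) (hB : MeasurableSet B) :
    mutualEM E.em f f B = E.Q f B := by
  set a := E.Q f B with ha
  set b := mutualEM E.em f f B with hbb
  set x : ℝ → ℝ := fun c => E.Q (c • f) B with hx
  have key : ∀ c d : ℝ, x (c + d) = x c + x d + 2 * (c * d) * b := by
    intro c d
    have h1 : (c + d) • f = c • f + d • f := add_smul c d f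
    have h2 := E.Q_add (c • f) (d • f) B
    have h3 : mutualEM E.em (c • f) (d • f) B = c * (d * b) := by
      rw [E.smul_left c f (d • f) B hB, E.m_smul_right d f f B hB]
    show E.Q ((c + d) • f) B = _
    rw [h1, h2, h3]; ring
  set ψ : ℝ → ℝ := fun c => x c - c ^ 2 * b with hψ
  have ψadd : ∀ c d : ℝ, ψ (c + d) = ψ c + ψ d := by
    intro c d; simp only [hψ]; rw [key]; ring
  have ψ0 : ψ 0 = 0 := by have := ψadd 0 0; simp at this; linarith
  have ψneg : ∀ c : ℝ, ψ (-c) = -ψ c := by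
    intro c; have := ψadd c (-c); rw [add_neg_cancel, ψ0] at this; linarith
  have ψnat : ∀ (n : ℕ) (c : ℝ), ψ (n * c) = n * ψ c := by
    intro n
    induction n with
    | zero => intro c; simpa using ψ0
    | succ n ih => intro c; push_cast; rw [add_mul, one_mul, ψadd, ih]; ring
  have ψ1 : ψ 1 = a - b := by
    simp only [hψ, hx]; rw [one_smul, one_pow, one_mul]
  have xnonneg : ∀ c : ℝ, 0 ≤ x c := fun c => E.Q_nonneg _ _
  have ψlb : ∀ c : ℝ, -(c ^ 2 * |b|) ≤ ψ c := by
    intro c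
    simp only [hψ]
    nlinarith [xnonneg c, le_abs_self b, sq_nonneg c]
  have hfrac : ∀ n : ℕ, 0 < n → ψ (1 / n) = (a - b) / n := by
    intro n hn
    have hne : (n : ℝ) ≠ 0 := Nat.cast_ne_zero.mpr hn.ne'
    have := ψnat n (1 / n)
    rw [mul_one_div, div_self hne, ψ1] at this
    rw [eq_div_iff hne, this, mul_comm]
  have key1 : ∀ n : ℕ, 0 < n → -(|b| / n) ≤ a - b := by
    intro n hn
    have hnp : (0:ℝ) < n := Nat.cast_pos.mpr hn
    have h := ψlb (1 / n)
    rw [hfrac n hn] at h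
    have h' := mul_le_mul_of_nonneg_left h hnp.le
    have e1 : (n:ℝ) * ((a - b) / n) = a - b := by field_simp
    have e2 : (n:ℝ) * -((1 / n) ^ 2 * |b|) = -(|b| / n) := by field_simp
    rw [e1, e2] at h'
    exact h'
  have key2 : ∀ n : ℕ, 0 < n → -(|b| / n) ≤ b - a := by
    intro n hn
    have hnp : (0:ℝ) < n := Nat.cast_pos.mpr hn
    have h := ψlb (-(1 / n))
    rw [ψneg, hfrac n hn, neg_sq] at h
    have h' := mul_le_mul_of_nonneg_left h hnp.le
    have e1 : (n:ℝ) * -((a - b) / n) = b - a := by field_simp; ring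
    have e2 : (n:ℝ) * -((1 / n) ^ 2 * |b|) = -(|b| / n) := by field_simp
    rw [e1, e2] at h'
    exact h'
  have hab : a = b := by
    by_contra hne
    have hd0 : 0 < |a - b| := abs_pos.mpr (sub_ne_zero.mpr hne)
    obtain ⟨n, hn⟩ := exists_nat_gt (|b| / |a - b|)
    have hn0 : 0 < n := by
      have h0 : (0:ℝ) ≤ |b| / |a - b| := by positivity
      exact_mod_cast Nat.cast_pos.mp (lt_of_le_of_lt h0 hn)
    have hnp : (0:ℝ) < n := Nat.cast_pos.mpr hn0
    have hlt : |b| / n < |a - b| := by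
      rw [div_lt_iff₀ hnp]
      rw [div_lt_iff₀ hd0] at hn
      nlinarith
    have h1 := key1 n hn0
    have h2 := key2 n hn0
    have habs : |a - b| < |a - b| := abs_lt.mpr ⟨by linarith, by linarith⟩
    exact absurd habs (lt_irrefl _)
  exact hab.symm

/-- Quadratic expansion. -/
lemma Q_expand (a b : F) (t : ℝ) (B : Set K) (hB : MeasurableSet B) :
    E.Q (a + t • b) B = E.Q a B + 2 * t * mutualEM E.em a b B + t ^ 2 * E.Q b B := by
  have h1 : E.Q (a + t • b) B = E.Q a B + E.Q (t • b) B + 2 * mutualEM E.em a (t • b) B :=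
    E.Q_add a (t • b) B
  have h2 : mutualEM E.em a (t • b) B = t * mutualEM E.em a b B := E.m_smul_right t a b B hB
  have h3 : E.Q (t • b) B = t ^ 2 * E.Q b B := by
    rw [← E.m_self (t • b) B hB, E.smul_left t b (t • b) B hB, E.m_smul_right t b b B hB,
      E.m_self b B hB]
    ring
  rw [h1, h2, h3]; ring


lemma sqrt_Q_add_le (u v : F) (B : Set K) (hB : MeasurableSet B) :
    Real.sqrt (E.Q (u + v) B) ≤ Real.sqrt (E.Q u B) + Real.sqrt (E.Q v B) := by
  have h := E.sqrt_diff_le (u + v) v B hB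
  have huv : u + v - v = u := add_sub_cancel_right u v
  rw [huv] at h
  have h2 : |Real.sqrt (E.Q (u + v) B) - Real.sqrt (E.Q v B)| ≤ Real.sqrt (E.Q u B) := by
    have := Real.sqrt_le_sqrt h
    rwa [Real.sqrt_sq_eq_abs] at this
  have := le_abs_self (Real.sqrt (E.Q (u + v) B) - Real.sqrt (E.Q v B))
  linarith

lemma sqrt_Q_lip (u v : F) (B : Set K) (hB : MeasurableSet B) :
    Real.sqrt (E.Q u B) ≤ Real.sqrt (E.Q v B) + Real.sqrt 2 * ‖u - v‖ := by
  have h := E.sqrt_diff_le u v B hB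
  have h2 := E.le_norm u v B hB
  have h3 : |Real.sqrt (E.Q u B) - Real.sqrt (E.Q v B)| ≤ Real.sqrt 2 * ‖u - v‖ := by
    have h4 := Real.sqrt_le_sqrt (le_trans h h2)
    rw [Real.sqrt_sq_eq_abs] at h4
    have h5 : Real.sqrt (2 * ‖u - v‖ ^ 2) = Real.sqrt 2 * ‖u - v‖ := by
      rw [Real.sqrt_mul (by norm_num), Real.sqrt_sq (norm_nonneg _)]
    rwa [h5] at h4
  have := le_abs_self (Real.sqrt (E.Q u B) - Real.sqrt (E.Q v B))
  linarith

/-- The candidate minimal energy-dominant measure built from a dense sequence. -/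
noncomputable def domMeas (e : ℕ → F) : Measure K :=
  Measure.sum fun n => ((((2:ℝ≥0∞)) ^ n)⁻¹ * (E.em (e n) Set.univ + 1)⁻¹) • E.em (e n)

lemma domMeas_apply (e : ℕ → F) {B : Set K} (hB : MeasurableSet B) :
    E.domMeas e B = ∑' n, (((2:ℝ≥0∞)) ^ n)⁻¹ * (E.em (e n) Set.univ + 1)⁻¹ * E.em (e n) B := by
  rw [domMeas, Measure.sum_apply _ hB]
  simp [Measure.smul_apply, smul_eq_mul]

instance isFiniteMeasure_domMeas (e : ℕ → F) : IsFiniteMeasure (E.domMeas e) := by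
  constructor
  have hle : ∀ n : ℕ, (((2:ℝ≥0∞)) ^ n)⁻¹ * (E.em (e n) Set.univ + 1)⁻¹ * E.em (e n) Set.univ
      ≤ (((2:ℝ≥0∞)) ^ n)⁻¹ := by
    intro n
    haveI := E.finite (e n)
    have h1 : (E.em (e n) Set.univ + 1)⁻¹ * E.em (e n) Set.univ ≤ 1 := by
      calc (E.em (e n) Set.univ + 1)⁻¹ * E.em (e n) Set.univ
          ≤ (E.em (e n) Set.univ + 1)⁻¹ * (E.em (e n) Set.univ + 1) :=
            mul_le_mul_right (le_add_of_nonneg_right zero_le_one) _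
        _ = 1 := ENNReal.inv_mul_cancel (by simp) (by simp [measure_ne_top])
    calc (((2:ℝ≥0∞)) ^ n)⁻¹ * (E.em (e n) Set.univ + 1)⁻¹ * E.em (e n) Set.univ
        = (((2:ℝ≥0∞)) ^ n)⁻¹ * ((E.em (e n) Set.univ + 1)⁻¹ * E.em (e n) Set.univ) := by ring
      _ ≤ (((2:ℝ≥0∞)) ^ n)⁻¹ * 1 := mul_le_mul_right h1 _
      _ = (((2:ℝ≥0∞)) ^ n)⁻¹ := mul_one _
  calc E.domMeas e Set.univ ≤ ∑' n : ℕ, (((2:ℝ≥0∞)) ^ n)⁻¹ := by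
        rw [E.domMeas_apply e MeasurableSet.univ]; exact ENNReal.tsum_le_tsum hle
    _ = ∑' n : ℕ, ((2:ℝ≥0∞))⁻¹ ^ n := by simp [ENNReal.inv_pow]
    _ = (1 - 2⁻¹)⁻¹ := ENNReal.tsum_geometric _
    _ < ⊤ := by norm_num

lemma em_seq_ac (e : ℕ → F) (n : ℕ) : E.em (e n) ≪ E.domMeas e := by
  refine Measure.AbsolutelyContinuous.mk fun B hB hν => ?_
  rw [E.domMeas_apply e hB] at hν
  have h := ENNReal.tsum_eq_zero.mp hν n
  haveI := E.finite (e n)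
  have h1 : (((2:ℝ≥0∞)) ^ n)⁻¹ ≠ 0 := by simp [ENNReal.pow_ne_top]
  have h2 : (E.em (e n) Set.univ + 1)⁻¹ ≠ 0 := by simp [measure_ne_top]
  rcases mul_eq_zero.mp h with h' | h'
  · rcases mul_eq_zero.mp h' with h'' | h''
    · exact absurd h'' h1
    · exact absurd h'' h2
  · exact h'

lemma Q_eq_zero_iff (g : F) (B : Set K) : E.Q g B = 0 ↔ E.em g B = 0 := by
  haveI := E.finite g
  rw [Q, ENNReal.toReal_eq_zero_iff]
  simp [measure_ne_top]

lemma em_ac_domMeas (e : ℕ → F) (he : DenseRange e) (g : F) : E.em g ≪ E.domMeas e := by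
  refine Measure.AbsolutelyContinuous.mk fun B hB hν => ?_
  have hzero : ∀ n, E.Q (e n) B = 0 := by
    intro n
    exact (E.Q_eq_zero_iff (e n) B).mpr (E.em_seq_ac e n hν)
  rw [← E.Q_eq_zero_iff g B]
  have hsq : Real.sqrt (E.Q g B) ≤ 0 := by
    refine le_of_forall_pos_le_add fun ε hε => ?_
    obtain ⟨n, hn⟩ := he.exists_dist_lt g (ε := ε / (Real.sqrt 2 + 1))
      (by positivity)
    have h := E.sqrt_Q_lip g (e n) B hB
    rw [hzero n, Real.sqrt_zero, zero_add] at h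
    have hd : ‖g - e n‖ < ε / (Real.sqrt 2 + 1) := by
      rwa [dist_eq_norm] at hn
    have hs2 : (0:ℝ) < Real.sqrt 2 := by positivity
    calc Real.sqrt (E.Q g B) ≤ Real.sqrt 2 * ‖g - e n‖ := h
      _ ≤ Real.sqrt 2 * (ε / (Real.sqrt 2 + 1)) :=
          mul_le_mul_of_nonneg_left (le_of_lt hd) hs2.le
      _ ≤ ε := by
          rw [mul_div_assoc']
          rw [div_le_iff₀ (by positivity)]
          nlinarith [hε.le, hs2.le]
      _ ≤ 0 + ε := by linarith
  have := Real.sqrt_nonneg (E.Q g B)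
  have h0 : Real.sqrt (E.Q g B) = 0 := le_antisymm hsq this
  have := E.Q_nonneg g B
  exact (Real.sqrt_eq_zero this).mp h0

lemma isMinimal_of (e : ℕ → F) (he : DenseRange e) (g : F)
    (h : E.domMeas e ≪ E.em g) : IsMinimalEnergyDominant E (E.em g) := by
  haveI := E.finite g
  refine ⟨inferInstance, fun f => (E.em_ac_domMeas e he f).trans h, fun ν' _ h' => h' g⟩


end EnergyMeasureAssignment

/-- Pure real lemma: a quadratic nonneg at all rationals has nonpositive discriminant. -/
lemma quad_nonneg_disc {α β γ : ℝ} (hα : 0 ≤ α) (hγ : 0 ≤ γ)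
    (h : ∀ q : ℚ, 0 ≤ α + 2 * q * β + q ^ 2 * γ) : β ^ 2 ≤ α * γ := by
  rcases eq_or_lt_of_le hγ with hγ0 | hγpos
  · -- γ = 0 : need β = 0
    have hβ : β = 0 := by
      by_contra hβ
      rcases lt_or_gt_of_ne hβ with hneg | hpos
      · obtain ⟨q, hq⟩ := exists_rat_gt ((α + 1) / (-2 * β))
        have := h q
        rw [← hγ0] at this
        have h2β : (0:ℝ) < -2 * β := by linarith
        rw [div_lt_iff₀ h2β] at hq
        nlinarith
      · obtain ⟨q, hq⟩ := exists_rat_lt (-(α + 1) / (2 * β))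
        have := h q
        rw [← hγ0] at this
        have h2β : (0:ℝ) < 2 * β := by linarith
        rw [lt_div_iff₀ h2β] at hq
        nlinarith
    rw [hβ, ← hγ0]
    simp
  · -- γ > 0
    refine le_of_forall_pos_le_add fun δ hδ => ?_
    set ε := Real.sqrt (δ / γ ^ 2) with hε
    have hεpos : 0 < ε := Real.sqrt_pos.mpr (by positivity)
    obtain ⟨q, hq⟩ := exists_rat_near (-β / γ) hεpos
    have hqd : |(-β / γ) - q| < ε := hq
    have hkey := h q
    -- α + 2qβ + q²γ = α - β²/γ + (q + β/γ)²γ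
    have hrw : α + 2 * q * β + q ^ 2 * γ
        = α - β ^ 2 / γ + ((q:ℝ) - (-β / γ)) ^ 2 * γ := by
      field_simp
      ring
    rw [hrw] at hkey
    have hd2 : ((q:ℝ) - (-β / γ)) ^ 2 < ε ^ 2 := by
      have : |(q:ℝ) - (-β / γ)| < ε := by rwa [abs_sub_comm] at hqd
      nlinarith [abs_nonneg ((q:ℝ) - (-β/γ)), sq_abs ((q:ℝ) - (-β/γ))]
    have hε2 : ε ^ 2 = δ / γ ^ 2 := Real.sq_sqrt (by positivity)
    have : 0 ≤ α - β ^ 2 / γ + (δ / γ ^ 2) * γ := by nlinarith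
    have h2 : 0 ≤ (α - β ^ 2 / γ + δ / γ ^ 2 * γ) * γ := mul_nonneg this hγpos.le
    have hx : (α - β ^ 2 / γ + δ / γ ^ 2 * γ) * γ = α * γ - β ^ 2 + δ := by
      field_simp
      try ring
    rw [hx] at h2
    linarith

namespace EnergyMeasureAssignment
variable {F K : Type*} [MeasurableSpace K] [NormedAddCommGroup F] [NormedSpace ℝ F]
variable (E : EnergyMeasureAssignment F K) (e : ℕ → F)

lemma Q_smul (c : ℝ) (g : F) (B : Set K) (hB : MeasurableSet B) :
    E.Q (c • g) B = c ^ 2 * E.Q g B := by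
  rw [← E.m_self (c • g) B hB, E.smul_left c g (c • g) B hB, E.m_smul_right c g g B hB,
    E.m_self g B hB]
  ring

/-- The real-valued density of `ν_g` with respect to the dominant measure. -/
noncomputable def r (g : F) : K → ℝ :=
  fun x => ((E.em g).rnDeriv (E.domMeas e) x).toReal

lemma r_nonneg (g : F) (x : K) : 0 ≤ E.r e g x := ENNReal.toReal_nonneg

lemma measurable_r (g : F) : Measurable (E.r e g) :=
  (Measure.measurable_rnDeriv _ _).ennreal_toReal

lemma setLIntegral_r (he : DenseRange e) (g : F) {B : Set K} (hB : MeasurableSet B) :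
    ∫⁻ x in B, (E.em g).rnDeriv (E.domMeas e) x ∂(E.domMeas e) = E.em g B := by
  haveI := E.finite g
  exact Measure.setLIntegral_rnDeriv' (E.em_ac_domMeas e he g) hB

lemma integrable_r (he : DenseRange e) (g : F) : Integrable (E.r e g) (E.domMeas e) := by
  haveI := E.finite g
  refine integrable_toReal_of_lintegral_ne_top (Measure.measurable_rnDeriv _ _).aemeasurable ?_
  rw [← setLIntegral_univ, E.setLIntegral_r e he g MeasurableSet.univ]
  exact measure_ne_top _ _

lemma setIntegral_r (he : DenseRange e) (g : F) {B : Set K} (hB : MeasurableSet B) :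
    ∫ x in B, E.r e g x ∂(E.domMeas e) = E.Q g B := by
  haveI := E.finite g
  unfold r
  rw [integral_toReal ((Measure.measurable_rnDeriv _ _).aemeasurable.restrict)
    (ae_restrict_of_ae (Measure.rnDeriv_lt_top _ _)), E.setLIntegral_r e he g hB]
  rfl

/-- The mutual density. -/
noncomputable def sig (a b : F) : K → ℝ :=
  fun x => (E.r e (a + b) x - E.r e a x - E.r e b x) / 2

lemma measurable_sig (a b : F) : Measurable (E.sig e a b) := by
  apply Measurable.div_const
  exact ((E.measurable_r e (a+b)).sub (E.measurable_r e a)).sub (E.measurable_r e b)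

lemma integrable_sig (he : DenseRange e) (a b : F) : Integrable (E.sig e a b) (E.domMeas e) := by
  apply Integrable.div_const
  exact ((E.integrable_r e he (a+b)).sub (E.integrable_r e he a)).sub (E.integrable_r e he b)

lemma setIntegral_sig (he : DenseRange e) (a b : F) {B : Set K} (hB : MeasurableSet B) :
    ∫ x in B, E.sig e a b x ∂(E.domMeas e) = mutualEM E.em a b B := by
  have h1 : IntegrableOn (fun x => E.r e (a + b) x - E.r e a x) B (E.domMeas e) :=
    ((E.integrable_r e he (a + b)).sub (E.integrable_r e he a)).integrableOn
  have h2 : IntegrableOn (fun x => E.r e b x) B (E.domMeas e) :=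
    (E.integrable_r e he b).integrableOn
  have h3 : IntegrableOn (fun x => E.r e (a + b) x) B (E.domMeas e) :=
    (E.integrable_r e he (a + b)).integrableOn
  have h4 : IntegrableOn (fun x => E.r e a x) B (E.domMeas e) :=
    (E.integrable_r e he a).integrableOn
  calc ∫ x in B, E.sig e a b x ∂(E.domMeas e)
      = (∫ x in B, (E.r e (a + b) x - E.r e a x) - E.r e b x ∂(E.domMeas e)) / 2 := by
        unfold sig; rw [integral_div]
    _ = ((∫ x in B, E.r e (a + b) x - E.r e a x ∂(E.domMeas e))
        - ∫ x in B, E.r e b x ∂(E.domMeas e)) / 2 := by rw [integral_sub h1 h2]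
    _ = ((∫ x in B, E.r e (a + b) x ∂(E.domMeas e)) - (∫ x in B, E.r e a x ∂(E.domMeas e))
        - ∫ x in B, E.r e b x ∂(E.domMeas e)) / 2 := by rw [integral_sub h3 h4]
    _ = (E.Q (a + b) B - E.Q a B - E.Q b B) / 2 := by
        rw [E.setIntegral_r e he (a + b) hB, E.setIntegral_r e he a hB,
          E.setIntegral_r e he b hB]
    _ = mutualEM E.em a b B := rfl

/-- The polynomial version of the density of `ν_{a+t·b}`. -/
noncomputable def pol (a b : F) (t : ℝ) : K → ℝ :=
  fun x => E.r e a x + 2 * t * E.sig e a b x + t ^ 2 * E.r e b x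

lemma r_eq_pol (he : DenseRange e) (a b : F) (t : ℝ) :
    E.r e (a + t • b) =ᵐ[E.domMeas e] E.pol e a b t := by
  haveI : IsFiniteMeasure (E.domMeas e) := E.isFiniteMeasure_domMeas e
  apply ae_eq_of_forall_setIntegral_eq_of_sigmaFinite
  · exact fun s hs _ => (E.integrable_r e he _).integrableOn
  · intro s hs _
    apply Integrable.integrableOn
    exact ((E.integrable_r e he a).add ((E.integrable_sig e he a b).const_mul _)).add
      ((E.integrable_r e he b).const_mul _)
  · intro s hs _
    rw [E.setIntegral_r e he _ hs]
    have h1 : IntegrableOn (fun x => E.r e a x) s (E.domMeas e) :=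
      (E.integrable_r e he a).integrableOn
    have h2 : IntegrableOn (fun x => 2 * t * E.sig e a b x) s (E.domMeas e) :=
      ((E.integrable_sig e he a b).const_mul _).integrableOn
    have h3 : IntegrableOn (fun x => t ^ 2 * E.r e b x) s (E.domMeas e) :=
      ((E.integrable_r e he b).const_mul _).integrableOn
    have h12 : IntegrableOn (fun x => E.r e a x + 2 * t * E.sig e a b x) s (E.domMeas e) :=
      h1.add h2
    calc E.Q (a + t • b) s
        = E.Q a s + 2 * t * mutualEM E.em a b s + t ^ 2 * E.Q b s := E.Q_expand a b t s hs
      _ = ∫ x in s, E.pol e a b t x ∂(E.domMeas e) := by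
          unfold pol
          rw [integral_add h12 h3, integral_add h1 h2, integral_const_mul, integral_const_mul,
            E.setIntegral_r e he a hs, E.setIntegral_r e he b hs,
            E.setIntegral_sig e he a b hs]

lemma r_nonneg_ae (g : F) : ∀ᵐ x ∂(E.domMeas e), 0 ≤ E.r e g x :=
  Filter.Eventually.of_forall (E.r_nonneg e g)

/-- Pointwise Cauchy-Schwarz for the densities. -/
lemma sig_sq_le (he : DenseRange e) (a b : F) :
    ∀ᵐ x ∂(E.domMeas e), (E.sig e a b x) ^ 2 ≤ E.r e a x * E.r e b x := by
  have hq : ∀ᵐ x ∂(E.domMeas e), ∀ q : ℚ, 0 ≤ E.pol e a b q x := by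
    rw [MeasureTheory.ae_all_iff]
    intro q
    filter_upwards [E.r_eq_pol e he a b q] with x hx
    rw [← hx]
    exact E.r_nonneg e _ x
  filter_upwards [hq] with x hx
  exact quad_nonneg_disc (E.r_nonneg e a x) (E.r_nonneg e b x) hx

/-- Pointwise triangle inequality for square roots of densities. -/
lemma sqrt_r_add_le (he : DenseRange e) (u v : F) :
    ∀ᵐ x ∂(E.domMeas e),
      Real.sqrt (E.r e (u + v) x) ≤ Real.sqrt (E.r e u x) + Real.sqrt (E.r e v x) := by
  have h1 := E.r_eq_pol e he u v 1
  filter_upwards [h1, E.sig_sq_le e he u v] with x hx hcs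
  have : u + (1:ℝ) • v = u + v := by rw [one_smul]
  rw [this] at hx
  have hσ : E.sig e u v x ≤ Real.sqrt (E.r e u x) * Real.sqrt (E.r e v x) := by
    have h2 : |E.sig e u v x| ≤ Real.sqrt (E.r e u x * E.r e v x) := by
      have := Real.sqrt_le_sqrt hcs
      rwa [Real.sqrt_sq_eq_abs] at this
    rw [Real.sqrt_mul (E.r_nonneg e u x)] at h2
    exact (le_abs_self _).trans h2
  have hb : E.r e (u + v) x ≤ (Real.sqrt (E.r e u x) + Real.sqrt (E.r e v x)) ^ 2 := by
    rw [hx]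
    unfold pol
    have hu := Real.sq_sqrt (E.r_nonneg e u x)
    have hv := Real.sq_sqrt (E.r_nonneg e v x)
    nlinarith [hσ]
  calc Real.sqrt (E.r e (u + v) x)
      ≤ Real.sqrt ((Real.sqrt (E.r e u x) + Real.sqrt (E.r e v x)) ^ 2) := Real.sqrt_le_sqrt hb
    _ = Real.sqrt (E.r e u x) + Real.sqrt (E.r e v x) := by
        rw [Real.sqrt_sq (by positivity)]

lemma r_smul_ae (he : DenseRange e) (c : ℝ) (g : F) :
    E.r e (c • g) =ᵐ[E.domMeas e] fun x => c ^ 2 * E.r e g x := by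
  haveI : IsFiniteMeasure (E.domMeas e) := E.isFiniteMeasure_domMeas e
  apply ae_eq_of_forall_setIntegral_eq_of_sigmaFinite
  · exact fun s hs _ => (E.integrable_r e he _).integrableOn
  · exact fun s hs _ => ((E.integrable_r e he g).const_mul _).integrableOn
  · intro s hs _
    rw [E.setIntegral_r e he _ hs, integral_const_mul, E.setIntegral_r e he g hs]
    exact E.Q_smul c g s hs

/-- Almost every point is charged by some element of the sequence. -/
lemma ae_exists_pos : ∀ᵐ x ∂(E.domMeas e), ∃ n, 0 < E.r e (e n) x := by
  set ν := E.domMeas e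
  have hfin : ∀ᵐ x ∂ν, ∀ n : ℕ, (E.em (e n)).rnDeriv ν x < ⊤ := by
    rw [MeasureTheory.ae_all_iff]
    intro n
    haveI := E.finite (e n)
    exact Measure.rnDeriv_lt_top _ _
  set A : Set K := {x | ∀ n : ℕ, (E.em (e n)).rnDeriv ν x = 0} with hA
  have hAmeas : MeasurableSet A := by
    have : A = ⋂ n : ℕ, {x | (E.em (e n)).rnDeriv ν x = 0} := by
      ext x; simp [hA, Set.mem_iInter]
    rw [this]
    exact MeasurableSet.iInter fun n =>
      (Measure.measurable_rnDeriv _ _) (measurableSet_singleton 0)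
  have hemA : ∀ n, E.em (e n) A = 0 := by
    intro n
    haveI := E.finite (e n)
    haveI : IsFiniteMeasure ν := E.isFiniteMeasure_domMeas e
    rw [← Measure.setLIntegral_rnDeriv' (E.em_seq_ac e n) hAmeas]
    rw [setLIntegral_congr_fun hAmeas (fun x hx => hx n)]
    simp
  have hνA : ν A = 0 := by
    rw [E.domMeas_apply e hAmeas]
    simp [hemA]
  have hae : ∀ᵐ x ∂ν, x ∉ A := by
    rw [ae_iff]
    simpa using hνA
  filter_upwards [hfin, hae] with x hx hxA
  simp only [hA, Set.mem_setOf_eq, not_forall] at hxA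
  obtain ⟨n, hn⟩ := hxA
  exact ⟨n, ENNReal.toReal_pos hn (hx n).ne⟩

/-- Measurability of the two-variable polynomial density. -/
lemma measurable_pol2 (a b : F) :
    Measurable (fun z : ℝ × K =>
      E.r e a z.2 + 2 * z.1 * E.sig e a b z.2 + z.1 ^ 2 * E.r e b z.2) := by
  apply Measurable.add
  apply Measurable.add
  · exact (E.measurable_r e a).comp measurable_snd
  · exact (measurable_const.mul measurable_fst).mul ((E.measurable_sig e a b).comp measurable_snd)
  · exact (measurable_fst.pow measurable_const).mul ((E.measurable_r e b).comp measurable_snd)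

/-- The key one-step lemma: a generic small perturbation of `a` in direction `b`
has a density positive wherever the density of `a` or of `b` is. -/
lemma step_ex (he : DenseRange e) (a b : F) :
    ∃ t ∈ Set.Ioc (0:ℝ) 1, ∀ᵐ x ∂(E.domMeas e),
      ((0 < E.r e a x ∨ 0 < E.r e b x) → 0 < E.r e (a + t • b) x) := by
  set ν := E.domMeas e with hν
  haveI : IsFiniteMeasure ν := E.isFiniteMeasure_domMeas e
  set μ := (volume : Measure ℝ).restrict (Set.Ioc (0:ℝ) 1) with hμ
  haveI : IsFiniteMeasure μ := by
    constructor
    rw [hμ, Measure.restrict_apply_univ, Real.volume_Ioc]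
    simp
  -- the bad set
  set p : K → ℝ → Prop := fun x t =>
    (0 < E.r e a x ∨ 0 < E.r e b x) →
      E.r e a x + 2 * t * E.sig e a b x + t ^ 2 * E.r e b x ≠ 0 with hp
  have hmeas : MeasurableSet {z : K × ℝ | p z.1 z.2} := by
    have h1 : MeasurableSet {z : K × ℝ | 0 < E.r e a z.1 ∨ 0 < E.r e b z.1} := by
      apply MeasurableSet.union
      · exact measurable_fst ((E.measurable_r e a) measurableSet_Ioi)
      · exact measurable_fst ((E.measurable_r e b) measurableSet_Ioi)
    have h2 : MeasurableSet {z : K × ℝ |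
        E.r e a z.1 + 2 * z.2 * E.sig e a b z.1 + z.2 ^ 2 * E.r e b z.1 ≠ 0} := by
      have := (E.measurable_pol2 e a b).comp (measurable_swap : Measurable (Prod.swap : K × ℝ → ℝ × K))
      exact (this (measurableSet_singleton 0)).compl
    have : {z : K × ℝ | p z.1 z.2} = {z : K × ℝ | 0 < E.r e a z.1 ∨ 0 < E.r e b z.1}ᶜ ∪
        {z : K × ℝ | E.r e a z.1 + 2 * z.2 * E.sig e a b z.1 + z.2 ^ 2 * E.r e b z.1 ≠ 0} := by
      ext z
      simp only [hp, Set.mem_setOf_eq, Set.mem_union, Set.mem_compl_iff]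
      tauto
    rw [this]
    exact h1.compl.union h2
  -- for each x, the exceptional set of t is finite
  have hsec : ∀ x : K, ∀ᵐ t ∂μ, p x t := by
    intro x
    set α := E.r e a x
    set β := E.sig e a b x
    set γ := E.r e b x
    by_cases hcond : 0 < α ∨ 0 < γ
    · set P : Polynomial ℝ := Polynomial.C α + Polynomial.C (2 * β) * Polynomial.X +
        Polynomial.C γ * Polynomial.X ^ 2 with hP
      have hPne : P ≠ 0 := by
        intro h0
        rcases hcond with h | h
        · have := congrArg (fun q => Polynomial.coeff q 0) h0
          simp [hP] at this
          exact absurd this h.ne'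
        · have := congrArg (fun q => Polynomial.coeff q 2) h0
          simp [hP, Polynomial.coeff_X, Polynomial.coeff_C] at this
          exact absurd this h.ne'
      have hfin : Set.Finite {t : ℝ | ¬ p x t} := by
        apply Set.Finite.subset (Polynomial.finite_setOf_isRoot hPne)
        intro t ht
        simp only [hp, Set.mem_setOf_eq, _root_.not_imp, not_not] at ht
        have heval : P.eval t = α + 2 * t * β + t ^ 2 * γ := by
          simp [hP]
          ring
        simp only [Set.mem_setOf_eq, Polynomial.IsRoot, heval]
        exact ht.2
      have hv : (volume : Measure ℝ) {t : ℝ | ¬ p x t} = 0 := hfin.measure_zero _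
      have : μ {t : ℝ | ¬ p x t} = 0 :=
        le_antisymm (le_trans (Measure.restrict_le_self _) (le_of_eq hv)) zero_le
      rw [ae_iff]
      exact this
    · refine Filter.Eventually.of_forall fun t => ?_
      intro hc
      exact absurd hc hcond
  have hswap : ∀ᵐ t ∂μ, ∀ᵐ x ∂ν, p x t := by
    rw [← Measure.ae_ae_comm hmeas]
    exact Filter.Eventually.of_forall fun x => hsec x
  have hmem : ∀ᵐ t ∂μ, t ∈ Set.Ioc (0:ℝ) 1 := ae_restrict_mem measurableSet_Ioc
  have hne : μ ≠ 0 := by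
    intro h0
    have : μ Set.univ = 0 := by rw [h0]; rfl
    rw [hμ, Measure.restrict_apply_univ, Real.volume_Ioc] at this
    simp at this
  haveI : Filter.NeBot (ae μ) := ae_neBot.mpr hne
  obtain ⟨t, hpt, htmem⟩ := (hswap.and hmem).exists
  refine ⟨t, htmem, ?_⟩
  filter_upwards [hpt, E.r_eq_pol e he a b t] with x hx hpol
  intro hcond
  have hne0 : E.pol e a b t x ≠ 0 := hx hcond
  rw [hpol]
  exact lt_of_le_of_ne (by rw [← hpol]; exact E.r_nonneg e _ x) (by rw [← hpol] at hne0; exact (Ne.symm (by rwa [hpol] at hne0)))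


/-- If the density of `ν_g` is a.e. positive, the dominant measure is absolutely
continuous with respect to `ν_g`. -/
lemma ac_of_ae_pos (he : DenseRange e) (g : F)
    (hpos : ∀ᵐ x ∂(E.domMeas e), 0 < E.r e g x) : E.domMeas e ≪ E.em g := by
  set ν := E.domMeas e
  haveI := E.finite g
  refine Measure.AbsolutelyContinuous.mk fun B hB h0 => ?_
  have hint : ∫⁻ x in B, (E.em g).rnDeriv ν x ∂ν = 0 := by
    rw [E.setLIntegral_r e he g hB, h0]
  rw [lintegral_eq_zero_iff (Measure.measurable_rnDeriv _ _)] at hint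
  have h1 : ∀ᵐ x ∂ν, x ∈ B → (E.em g).rnDeriv ν x = 0 :=
    (ae_restrict_iff' hB).mp hint
  have h2 : ∀ᵐ x ∂ν, x ∉ B := by
    filter_upwards [h1, hpos] with x hx hxpos
    intro hxB
    rw [r, hx hxB] at hxpos
    simp at hxpos
  rw [ae_iff] at h2
  simpa using h2

/-- The main step of the construction. -/
lemma step_main (he : DenseRange e) (k : ℕ) (g : F) (β : ℝ) (hβ : 0 < β)
    (hcov : ∀ᵐ x ∂(E.domMeas e), (∃ j, j < k ∧ 0 < E.r e (e j) x) → 0 < E.r e g x) :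
    ∃ (g' : F) (θ' : ℝ), 0 < θ' ∧ ‖g' - g‖ ≤ β * (2⁻¹:ℝ) ^ (k+1) ∧
      (∀ᵐ x ∂(E.domMeas e), (∃ j, j < k + 1 ∧ 0 < E.r e (e j) x) → 0 < E.r e g' x) ∧
      E.domMeas e ({x | ∃ j, j < k + 1 ∧ 0 < E.r e (e j) x} ∩
        {x | Real.sqrt (E.r e g' x) ≤ θ'}) ≤ (2⁻¹ : ℝ≥0∞) ^ (k+1) := by
  set ν := E.domMeas e with hνdef
  haveI : IsFiniteMeasure ν := E.isFiniteMeasure_domMeas e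
  set c : ℝ := β * (2⁻¹:ℝ) ^ (k+1) * (1 + ‖e k‖)⁻¹ with hc
  have hcpos : 0 < c := by
    apply mul_pos (mul_pos hβ (by positivity))
    have : (0:ℝ) < 1 + ‖e k‖ := by positivity
    positivity
  obtain ⟨t, htmem, hstep⟩ := E.step_ex e he g (c • e k)
  set g' : F := g + (t * c) • e k with hg'
  have hsm : g + t • (c • e k) = g' := by rw [hg', smul_smul]
  have hnorm : ‖g' - g‖ ≤ β * (2⁻¹:ℝ) ^ (k+1) := by
    have h1 : g' - g = (t * c) • e k := by rw [hg']; abel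
    rw [h1, norm_smul]
    have htc : |t * c| ≤ c := by
      rw [abs_of_pos (mul_pos htmem.1 hcpos)]
      calc t * c ≤ 1 * c := mul_le_mul_of_nonneg_right htmem.2 hcpos.le
        _ = c := one_mul c
    have h1e : (0:ℝ) < 1 + ‖e k‖ := by positivity
    calc |t * c| * ‖e k‖ ≤ c * ‖e k‖ := mul_le_mul_of_nonneg_right htc (norm_nonneg _)
      _ = β * (2⁻¹:ℝ) ^ (k+1) * ((1 + ‖e k‖)⁻¹ * ‖e k‖) := by rw [hc]; ring
      _ ≤ β * (2⁻¹:ℝ) ^ (k+1) * 1 := by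
          apply mul_le_mul_of_nonneg_left _ (by positivity)
          rw [inv_mul_le_iff₀ h1e, mul_one]
          linarith [norm_nonneg (e k)]
      _ = β * (2⁻¹:ℝ) ^ (k+1) := mul_one _
  have hcov' : ∀ᵐ x ∂ν, (∃ j, j < k + 1 ∧ 0 < E.r e (e j) x) → 0 < E.r e g' x := by
    filter_upwards [hstep, E.r_smul_ae e he c (e k), hcov] with x hx hsq hcv
    rintro ⟨j, hj, hjpos⟩
    rw [← hsm]
    rcases Nat.lt_succ_iff_lt_or_eq.mp hj with hjk | rfl
    · exact hx (Or.inl (hcv ⟨j, hjk, hjpos⟩))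
    · apply hx
      right
      rw [hsq]
      exact mul_pos (pow_pos hcpos 2) hjpos
  -- choose θ'
  set Ak : Set K := {x | ∃ j, j < k + 1 ∧ 0 < E.r e (e j) x} with hAk
  have hAkm : MeasurableSet Ak := by
    have : Ak = ⋃ j ∈ Finset.range (k+1), {x | 0 < E.r e (e j) x} := by
      ext x
      simp [hAk, Set.mem_iUnion, Finset.mem_range]
    rw [this]
    apply MeasurableSet.biUnion (Finset.range (k+1)).countable_toSet
    intro j _
    exact (E.measurable_r e (e j)) measurableSet_Ioi
  set D : ℕ → Set K := fun n => Ak ∩ {x | Real.sqrt (E.r e g' x) ≤ (1 + (n:ℝ))⁻¹} with hD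
  have hDm : ∀ n, MeasurableSet (D n) := by
    intro n
    apply hAkm.inter
    exact (((E.measurable_r e g').sqrt) measurableSet_Iic)
  have hanti : Antitone D := by
    intro m n hmn
    apply Set.inter_subset_inter_right
    intro x hx
    simp only [Set.mem_setOf_eq] at hx ⊢
    refine le_trans hx ?_
    apply inv_anti₀ (by positivity)
    have : (m:ℝ) ≤ n := Nat.cast_le.mpr hmn
    linarith
  have hInull : ν (⋂ n, D n) = 0 := by
    have hsub : (⋂ n, D n) ⊆
        {x | ¬ ((∃ j, j < k + 1 ∧ 0 < E.r e (e j) x) → 0 < E.r e g' x)} := by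
      intro x hx
      have hx0 := Set.mem_iInter.mp hx 0
      have hxAk : x ∈ Ak := hx0.1
      have hle : ∀ n : ℕ, Real.sqrt (E.r e g' x) ≤ (1 + (n:ℝ))⁻¹ := fun n =>
        (Set.mem_iInter.mp hx n).2
      have hs0 : Real.sqrt (E.r e g' x) ≤ 0 := by
        by_contra hpos
        push_neg at hpos
        obtain ⟨n, hn⟩ := exists_nat_gt (Real.sqrt (E.r e g' x))⁻¹
        have hn' : (1 + (n:ℝ))⁻¹ < Real.sqrt (E.r e g' x) := by
          rw [inv_lt_comm₀ (by positivity) hpos]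
          calc (Real.sqrt (E.r e g' x))⁻¹ < n := hn
            _ < 1 + n := by linarith
        exact absurd (hle n) (not_le.mpr hn')
      simp only [Set.mem_setOf_eq]
      intro himp
      have hgt := himp hxAk
      have := Real.sqrt_pos.mpr hgt
      linarith
    exact measure_mono_null hsub (ae_iff.mp hcov')
  have htd := tendsto_measure_iInter_atTop (μ := ν) (fun n => (hDm n).nullMeasurableSet) hanti
    ⟨0, measure_ne_top ν _⟩
  rw [hInull] at htd
  have hev : ∀ᶠ n in Filter.atTop, ν (D n) < (2⁻¹ : ℝ≥0∞) ^ (k+1) :=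
    htd.eventually_lt_const (by
      have : (2⁻¹ : ℝ≥0∞) ^ (k+1) ≠ 0 := by
        apply pow_ne_zero
        simp
      exact pos_iff_ne_zero.mpr this)
  obtain ⟨n, hn⟩ := hev.exists
  refine ⟨g', (1 + (n:ℝ))⁻¹, by positivity, hnorm, hcov', ?_⟩
  exact le_of_lt hn

/-- Chebyshev bound for the density of a small difference. -/
lemma meas_rnDeriv_ge (he : DenseRange e) (w : F) {θ : ℝ} (hθ : 0 < θ) :
    E.domMeas e {x | ENNReal.ofReal (θ ^ 2) ≤ (E.em w).rnDeriv (E.domMeas e) x}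
      ≤ ENNReal.ofReal (2 * ‖w‖ ^ 2 / θ ^ 2) := by
  set ν := E.domMeas e
  haveI := E.finite w
  haveI : IsFiniteMeasure ν := E.isFiniteMeasure_domMeas e
  have h1 : ν {x | ENNReal.ofReal (θ ^ 2) ≤ (E.em w).rnDeriv ν x}
      ≤ (∫⁻ x, (E.em w).rnDeriv ν x ∂ν) / ENNReal.ofReal (θ ^ 2) :=
    meas_ge_le_lintegral_div (Measure.measurable_rnDeriv _ _).aemeasurable
      (by simp [ENNReal.ofReal_eq_zero]; positivity) ENNReal.ofReal_ne_top
  have h2 : ∫⁻ x, (E.em w).rnDeriv ν x ∂ν = E.em w Set.univ := by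
    rw [← setLIntegral_univ]
    exact E.setLIntegral_r e he w MeasurableSet.univ
  have h3 : E.em w Set.univ ≤ ENNReal.ofReal (2 * ‖w‖ ^ 2) := by
    have h4 := E.le_norm w 0 Set.univ MeasurableSet.univ
    rw [sub_zero] at h4
    calc E.em w Set.univ = ENNReal.ofReal ((E.em w Set.univ).toReal) :=
          (ENNReal.ofReal_toReal (measure_ne_top _ _)).symm
      _ ≤ ENNReal.ofReal (2 * ‖w‖ ^ 2) := ENNReal.ofReal_le_ofReal h4
  calc ν {x | ENNReal.ofReal (θ ^ 2) ≤ (E.em w).rnDeriv ν x}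
      ≤ (∫⁻ x, (E.em w).rnDeriv ν x ∂ν) / ENNReal.ofReal (θ ^ 2) := h1
    _ ≤ ENNReal.ofReal (2 * ‖w‖ ^ 2) / ENNReal.ofReal (θ ^ 2) := by
        rw [h2]
        exact ENNReal.div_le_div_right h3 _
    _ = ENNReal.ofReal (2 * ‖w‖ ^ 2 / θ ^ 2) := by
        rw [ENNReal.ofReal_div_of_pos (by positivity)]

/-- Pointwise lower bound on the square-root density after perturbation. -/
lemma sqrt_r_lower (he : DenseRange e) (a b : F) :
    ∀ᵐ x ∂(E.domMeas e),
      Real.sqrt (E.r e a x) ≤ Real.sqrt (E.r e b x) + Real.sqrt (E.r e (b - a) x) := by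
  have h1 := E.sqrt_r_add_le e he (a - b) b
  have h2 : E.r e (a - b) =ᵐ[E.domMeas e] E.r e (b - a) := by
    have h3 := E.r_smul_ae e he (-1 : ℝ) (b - a)
    have h4 : (-1 : ℝ) • (b - a) = a - b := by
      rw [neg_smul, one_smul, neg_sub]
    rw [h4] at h3
    filter_upwards [h3] with x hx
    rw [hx]; ring
  filter_upwards [h1, h2] with x hx h2x
  have h5 : a - b + b = a := sub_add_cancel a b
  rw [h5] at hx
  rw [← h2x]
  linarith [hx]

end EnergyMeasureAssignment

/-- Dependent choice along `ℕ` with an invariant. -/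
lemma dep_choice {S : Type*} (Inv : ℕ → S → Prop) (R : ℕ → S → S → Prop)
    (s0 : S) (h0 : Inv 0 s0)
    (step : ∀ k s, Inv k s → ∃ s', Inv (k+1) s' ∧ R k s s') :
    ∃ u : ℕ → S, u 0 = s0 ∧ (∀ k, Inv k (u k)) ∧ ∀ k, R k (u k) (u (k+1)) := by
  choose! next hnext hR using step
  let aux : ∀ _ : ℕ, {s : S // Inv _ s} := fun k =>
    Nat.rec (motive := fun k => {s : S // Inv k s}) ⟨s0, h0⟩
      (fun k p => ⟨next k p.1, hnext k p.1 p.2⟩) k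
  refine ⟨fun k => (aux k).1, rfl, fun k => (aux k).2, fun k => ?_⟩
  exact hR k (aux k).1 (aux k).2


/-- Proposition 2.6 of the paper: for an energy-measure assignment on a separable real Hilbert
space `F`, the set `F_dom` of `f` whose energy measure is a minimal energy-dominant measure
is dense in `F`. -/
theorem stmt10 {F K : Type*} [MeasurableSpace K] [NormedAddCommGroup F]
    [InnerProductSpace ℝ F] [CompleteSpace F] [TopologicalSpace.SeparableSpace F]
    (E : EnergyMeasureAssignment F K) :
    Dense {f : F | IsMinimalEnergyDominant E (E.em f)} := by
  classical
  haveI : Nonempty F := ⟨0⟩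
  set e : ℕ → F := TopologicalSpace.denseSeq F with he_def
  have he : DenseRange e := TopologicalSpace.denseRange_denseSeq F
  set ν := E.domMeas e with hν
  haveI : IsFiniteMeasure ν := E.isFiniteMeasure_domMeas e
  rw [Metric.dense_iff]
  intro f ε hε
  set Inv : ℕ → F × ℝ × ℝ → Prop := fun k s =>
    0 < s.2.1 ∧ 0 < s.2.2 ∧ s.2.2 ≤ s.2.1 * (4⁻¹:ℝ) ^ k ∧ s.2.2 ≤ 1 ∧
    (∀ᵐ x ∂ν, (∃ j, j < k ∧ 0 < E.r e (e j) x) → 0 < E.r e s.1 x) ∧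
    ν ({x | ∃ j, j < k ∧ 0 < E.r e (e j) x} ∩
      {x | Real.sqrt (E.r e s.1 x) ≤ s.2.1}) ≤ (2⁻¹:ℝ≥0∞) ^ k with hInv
  set R : ℕ → F × ℝ × ℝ → F × ℝ × ℝ → Prop := fun k s s' =>
    ‖s'.1 - s.1‖ ≤ s.2.2 * (2⁻¹:ℝ) ^ (k+1) ∧ s'.2.2 ≤ s.2.2 with hR
  have h0 : Inv 0 (f, 1, min 1 (ε/2)) := by
    refine ⟨one_pos, lt_min one_pos (half_pos hε), ?_, min_le_left _ _, ?_, ?_⟩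
    · simpa using min_le_left 1 (ε/2)
    · filter_upwards with x
      rintro ⟨j, hj, _⟩
      exact absurd hj (Nat.not_lt_zero j)
    · have hempty : {x : K | ∃ j, j < 0 ∧ 0 < E.r e (e j) x} = ∅ := by
        ext x; simp
      rw [hempty, Set.empty_inter]
      simp
  have hstep : ∀ k s, Inv k s → ∃ s', Inv (k+1) s' ∧ R k s s' := by
    rintro k ⟨g, θ, β⟩ ⟨hθ, hβ, hβθ, hβ1, hcov, _⟩
    obtain ⟨g', θ', hθ', hnorm, hcov', hmeas⟩ := E.step_main e he k g β hβ hcov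
    refine ⟨(g', θ', min β (θ' * (4⁻¹:ℝ) ^ (k+1))),
      ⟨hθ', lt_min hβ (by positivity), min_le_right _ _,
        le_trans (min_le_left _ _) hβ1, hcov', hmeas⟩,
      ⟨hnorm, min_le_left _ _⟩⟩
  obtain ⟨u, hu0, huI, huR⟩ := dep_choice Inv R _ h0 hstep
  set gs : ℕ → F := fun k => (u k).1 with hgs
  set θs : ℕ → ℝ := fun k => (u k).2.1 with hθs
  set βs : ℕ → ℝ := fun k => (u k).2.2 with hβs
  have hθpos : ∀ k, 0 < θs k := fun k => (huI k).1
  have hβpos : ∀ k, 0 < βs k := fun k => (huI k).2.1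
  have hβθ : ∀ k, βs k ≤ θs k * (4⁻¹:ℝ) ^ k := fun k => (huI k).2.2.1
  have hβ1 : ∀ k, βs k ≤ 1 := fun k => (huI k).2.2.2.1
  have hcovk : ∀ k, ∀ᵐ x ∂ν, (∃ j, j < k ∧ 0 < E.r e (e j) x) → 0 < E.r e (gs k) x :=
    fun k => (huI k).2.2.2.2.1
  have hbad1 : ∀ k, ν ({x | ∃ j, j < k ∧ 0 < E.r e (e j) x} ∩
      {x | Real.sqrt (E.r e (gs k) x) ≤ θs k}) ≤ (2⁻¹:ℝ≥0∞) ^ k :=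
    fun k => (huI k).2.2.2.2.2
  have hstepnorm : ∀ k, ‖gs (k+1) - gs k‖ ≤ βs k * (2⁻¹:ℝ) ^ (k+1) := fun k => (huR k).1
  have hβmono : ∀ j k, j ≤ k → βs k ≤ βs j := by
    intro j k hjk
    exact antitone_nat_of_succ_le (fun n => (huR n).2) hjk
  -- geometric bound on partial differences
  have hsum : ∀ k m, k ≤ m → ‖gs m - gs k‖ ≤ βs k * ((2⁻¹:ℝ) ^ k - (2⁻¹:ℝ) ^ m) := by
    intro k m hkm
    induction m, hkm using Nat.le_induction with
    | base => simp
    | succ m hkm ih =>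
      have h1 := hstepnorm m
      have h2 : ‖gs (m+1) - gs k‖ ≤ ‖gs (m+1) - gs m‖ + ‖gs m - gs k‖ :=
        norm_sub_le_norm_sub_add_norm_sub _ _ _
      have h3 : βs m * (2⁻¹:ℝ) ^ (m+1) ≤ βs k * (2⁻¹:ℝ) ^ (m+1) :=
        mul_le_mul_of_nonneg_right (hβmono k m hkm) (by positivity)
      have h4 : ((2⁻¹:ℝ)) ^ (m+1) = (2⁻¹:ℝ) ^ m * 2⁻¹ := pow_succ _ _
      have h5 : ‖gs (m+1) - gs k‖ ≤ βs k * (2⁻¹:ℝ)^(m+1) + βs k * ((2⁻¹:ℝ)^k - (2⁻¹:ℝ)^m) :=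
        by linarith
      have h6 : βs k * (2⁻¹:ℝ)^(m+1) + βs k * ((2⁻¹:ℝ)^k - (2⁻¹:ℝ)^m)
          = βs k * ((2⁻¹:ℝ)^k - (2⁻¹:ℝ)^(m+1)) := by
        rw [h4]; ring
      linarith
  have hsum' : ∀ k m, k ≤ m → ‖gs m - gs k‖ ≤ βs k * (2⁻¹:ℝ) ^ k := by
    intro k m hkm
    refine (hsum k m hkm).trans ?_
    apply mul_le_mul_of_nonneg_left _ (hβpos k).le
    have : (0:ℝ) ≤ (2⁻¹:ℝ) ^ m := by positivity
    linarith
  -- Cauchy sequence and limit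
  have hcauchy : CauchySeq gs := by
    apply cauchySeq_of_le_geometric 2⁻¹ 1 (by norm_num)
    intro n
    rw [dist_eq_norm, norm_sub_rev]
    calc ‖gs (n+1) - gs n‖ ≤ βs n * (2⁻¹:ℝ) ^ (n+1) := hstepnorm n
      _ ≤ 1 * (2⁻¹:ℝ) ^ (n+1) := mul_le_mul_of_nonneg_right (hβ1 n) (by positivity)
      _ ≤ 1 * (2⁻¹:ℝ) ^ n := by
          rw [one_mul, one_mul]
          apply pow_le_pow_of_le_one (by norm_num) (by norm_num)
          omega
  obtain ⟨g, hgt⟩ := cauchySeq_tendsto_of_complete hcauchy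
  have hlim : ∀ k, ‖g - gs k‖ ≤ βs k * (2⁻¹:ℝ) ^ k := by
    intro k
    have h1 : Filter.Tendsto (fun m => ‖gs m - gs k‖) Filter.atTop (nhds ‖g - gs k‖) :=
      ((hgt.sub tendsto_const_nhds).norm)
    refine le_of_tendsto h1 ?_
    filter_upwards [Filter.eventually_ge_atTop k] with m hm using hsum' k m hm
  -- distance to f
  have hg0 : gs 0 = f := by simp only [hgs, hu0]
  have hβ0 : βs 0 = min 1 (ε/2) := by simp only [hβs, hu0]
  have hdist : dist g f < ε := by
    rw [dist_eq_norm]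
    have h1 := hlim 0
    rw [pow_zero, mul_one, hg0, hβ0] at h1
    calc ‖g - f‖ ≤ min 1 (ε/2) := h1
      _ ≤ ε/2 := min_le_right _ _
      _ < ε := by linarith
  -- bad sets and Borel-Cantelli
  set bad1 : ℕ → Set K := fun k => {x | ∃ j, j < k ∧ 0 < E.r e (e j) x} ∩
    {x | Real.sqrt (E.r e (gs k) x) ≤ θs k} with hbad1def
  set bad2 : ℕ → Set K := fun k =>
    {x | ENNReal.ofReal ((θs k / 2) ^ 2) ≤ (E.em (g - gs k)).rnDeriv ν x} with hbad2def
  have hbad2 : ∀ k, ν (bad2 k) ≤ ENNReal.ofReal (8 * (2⁻¹:ℝ) ^ k) := by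
    intro k
    have hθ2 : 0 < θs k / 2 := by have := hθpos k; linarith
    have h1 := E.meas_rnDeriv_ge e he (g - gs k) hθ2
    refine h1.trans (ENNReal.ofReal_le_ofReal ?_)
    have h2 : ‖g - gs k‖ ≤ θs k * (4⁻¹:ℝ) ^ k * (2⁻¹:ℝ) ^ k := by
      refine (hlim k).trans ?_
      exact mul_le_mul_of_nonneg_right (hβθ k) (by positivity)
    rw [div_le_iff₀ (by positivity)]
    have h3 : (0:ℝ) ≤ ‖g - gs k‖ := norm_nonneg _
    have h4 : ((4⁻¹:ℝ) ^ k) ≤ 1 := pow_le_one₀ (by norm_num) (by norm_num)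
    have h5 : ((2⁻¹:ℝ) ^ k) ≤ 1 := pow_le_one₀ (by norm_num) (by norm_num)
    have h6 : (0:ℝ) < (2⁻¹:ℝ) ^ k := by positivity
    have h7 : (0:ℝ) < (4⁻¹:ℝ) ^ k := by positivity
    have hθk := hθpos k
    -- goal : 2 * ‖g - gs k‖ ^ 2 ≤ 8 * 2⁻¹^k * (θs k / 2)^2
    nlinarith [sq_nonneg (θs k * (4⁻¹:ℝ)^k * (2⁻¹:ℝ)^k), mul_pos h6 h7,
      mul_le_mul_of_nonneg_left (mul_le_one₀ h4 h6.le h5) (sq_nonneg (θs k)),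
      sq_nonneg (‖g - gs k‖ + θs k * (4⁻¹:ℝ)^k * (2⁻¹:ℝ)^k)]
  set bad : ℕ → Set K := fun k => bad1 k ∪ bad2 k with hbaddef
  have hofreal : ∀ k : ℕ, ENNReal.ofReal (8 * (2⁻¹:ℝ) ^ k)
      = ENNReal.ofReal 8 * (2⁻¹:ℝ≥0∞) ^ k := by
    intro k
    rw [ENNReal.ofReal_mul (by norm_num), ENNReal.ofReal_pow (by norm_num)]
    congr 1
    rw [ENNReal.ofReal_inv_of_pos (by norm_num)]
    norm_num
  have hsumbad : ∑' k, ν (bad k) ≠ ⊤ := by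
    have h1 : ∀ k, ν (bad k) ≤ (1 + ENNReal.ofReal 8) * (2⁻¹:ℝ≥0∞) ^ k := by
      intro k
      calc ν (bad k) ≤ ν (bad1 k) + ν (bad2 k) := measure_union_le _ _
        _ ≤ (2⁻¹:ℝ≥0∞) ^ k + ENNReal.ofReal 8 * (2⁻¹:ℝ≥0∞) ^ k := by
            refine add_le_add (hbad1 k) ?_
            rw [← hofreal k]
            exact hbad2 k
        _ = (1 + ENNReal.ofReal 8) * (2⁻¹:ℝ≥0∞) ^ k := by ring
    have h2 : ∑' k, ν (bad k) ≤ (1 + ENNReal.ofReal 8) * ∑' k : ℕ, (2⁻¹:ℝ≥0∞) ^ k := by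
      rw [← ENNReal.tsum_mul_left]
      exact ENNReal.tsum_le_tsum h1
    have h3 : ∑' k : ℕ, (2⁻¹:ℝ≥0∞) ^ k = 2 := by
      rw [ENNReal.tsum_geometric, ENNReal.one_sub_inv_two, inv_inv]
    rw [h3] at h2
    refine ne_top_of_le_ne_top ?_ h2
    apply ENNReal.mul_ne_top
    · exact ENNReal.add_ne_top.mpr ⟨ENNReal.one_ne_top, ENNReal.ofReal_ne_top⟩
    · exact ENNReal.ofNat_ne_top
  have hBC : ∀ᵐ x ∂ν, ∀ᶠ k in Filter.atTop, x ∉ bad k :=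
    MeasureTheory.ae_eventually_notMem hsumbad
  -- almost everywhere positivity of the density of the limit
  have hlower : ∀ᵐ x ∂ν, ∀ k, Real.sqrt (E.r e (gs k) x)
      ≤ Real.sqrt (E.r e g x) + Real.sqrt (E.r e (g - gs k) x) :=
    MeasureTheory.ae_all_iff.mpr fun k => E.sqrt_r_lower e he (gs k) g
  have hpos : ∀ᵐ x ∂ν, 0 < E.r e g x := by
    filter_upwards [hBC, E.ae_exists_pos e, hlower] with x hx hc hl
    obtain ⟨n, hn⟩ := hc
    obtain ⟨N, hN⟩ := (Filter.eventually_atTop).mp hx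
    set k := max N (n+1) with hk
    have hk1 : n < k := lt_of_lt_of_le (Nat.lt_succ_self n) (le_max_right _ _)
    have hk2 : x ∉ bad k := hN k (le_max_left _ _)
    have hxA : ∃ j, j < k ∧ 0 < E.r e (e j) x := ⟨n, hk1, hn⟩
    have hnb1 : x ∉ bad1 k := fun h => hk2 (Or.inl h)
    have hnb2 : x ∉ bad2 k := fun h => hk2 (Or.inr h)
    have hθk : θs k < Real.sqrt (E.r e (gs k) x) := by
      by_contra h
      push_neg at h
      exact hnb1 ⟨hxA, h⟩
    have hw : Real.sqrt (E.r e (g - gs k) x) < θs k / 2 := by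
      have h1 : (E.em (g - gs k)).rnDeriv ν x < ENNReal.ofReal ((θs k / 2) ^ 2) := by
        by_contra h
        push_neg at h
        exact hnb2 h
      have h2 : E.r e (g - gs k) x < (θs k / 2) ^ 2 := by
        unfold EnergyMeasureAssignment.r
        exact ENNReal.toReal_lt_of_lt_ofReal h1
      have h3 := Real.sqrt_lt_sqrt (E.r_nonneg e (g - gs k) x) h2
      rwa [Real.sqrt_sq (by have := hθpos k; linarith)] at h3
    have hge := hl k
    have hgt : 0 < Real.sqrt (E.r e g x) := by
      have := hθpos k
      linarith
    exact Real.sqrt_pos.mp hgt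
  refine ⟨g, Metric.mem_ball.mpr hdist, ?_⟩
  exact E.isMinimal_of e he g (E.ac_of_ae_pos e he g hpos)
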